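/- arXiv:2008.10847 — 4 statements merged into one kernel-verified Lean document; each statement's English description precedes it below -/
import Mathlib

section
/- Let θ : ℝ → ℝ^d and y : ℝ → ℝ^m be differentiable curves satisfying θ'(t) = −α Dg(θ(t))ᵀ ∇f(y(t)) with α > 0. If Dg has operator norm bounded by C_g and ∇f is L_f-Lipschitz, then for all t, d/dt [f(g(θ(t)))] ≤ −(1/(2α))‖θ'(t)‖² + (α C_g² L_f² / 2)‖g(θ(t)) − y(t)‖². -/
open RealInnerProductSpace

set_option maxHeartbeats 1000000 in
theorem stmt2 {d m : ℕ}
    (f : EuclideanSpace ℝ (Fin m) → ℝ)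
    (g : EuclideanSpace ℝ (Fin d) → EuclideanSpace ℝ (Fin m))
    (Cg Lf α : ℝ) (hα : 0 < α)
    (hf : ContDiff ℝ 1 f) (hg : ContDiff ℝ 1 g)
    (hCg : ∀ θ, ‖fderiv ℝ g θ‖ ≤ Cg)
    (hLf : ∀ u v, ‖gradient f u - gradient f v‖ ≤ Lf * ‖u - v‖)
    (θ : ℝ → EuclideanSpace ℝ (Fin d)) (y : ℝ → EuclideanSpace ℝ (Fin m))
    (θ' : ℝ → EuclideanSpace ℝ (Fin d))
    (hy : Differentiable ℝ y)
    (hODE : ∀ t, HasDerivAt θ (θ' t) t)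
    (hθ' : ∀ t, θ' t = -α • (ContinuousLinearMap.adjoint (fderiv ℝ g (θ t))) (gradient f (y t))) :
    ∀ t, deriv (fun s => f (g (θ s))) t
      ≤ -(1 / (2 * α)) * ‖θ' t‖ ^ 2 + (α * Cg ^ 2 * Lf ^ 2 / 2) * ‖g (θ t) - y t‖ ^ 2 := by
  intro t
  set A := fderiv ℝ g (θ t) with hA
  set u := gradient f (g (θ t)) with hu
  set w := gradient f (y t) with hw
  set v := θ' t with hv
  have hg' := (hg.differentiable one_ne_zero (θ t)).hasFDerivAt
  have hf' := (hf.differentiable one_ne_zero (g (θ t))).hasFDerivAt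
  have h1 : HasDerivAt (fun s => f (g (θ s))) ((fderiv ℝ f (g (θ t))) (A v)) t :=
    (hf'.comp _ hg').comp_hasDerivAt t (hODE t)
  have key : ∀ z, ⟪u, z⟫ = fderiv ℝ f (g (θ t)) z := by
    intro z
    rw [hu, gradient, ← InnerProductSpace.toDual_apply_apply,
      LinearIsometryEquiv.apply_symm_apply]
  have hderiv : deriv (fun s => f (g (θ s))) t = ⟪u, A v⟫ := by
    rw [h1.deriv, key]
  have hadj : ⟪u, A v⟫ = ⟪(ContinuousLinearMap.adjoint A) u, v⟫ :=
    (ContinuousLinearMap.adjoint_inner_left A v u).symm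
  have hAw : (ContinuousLinearMap.adjoint A) w = -(α⁻¹) • v := by
    have := hθ' t
    rw [← hv, ← hA, ← hw] at this
    rw [this]
    rw [smul_smul]
    field_simp
    rw [one_smul]
  have hsplit : ⟪(ContinuousLinearMap.adjoint A) u, v⟫
      = ⟪(ContinuousLinearMap.adjoint A) (u - w), v⟫ - α⁻¹ * ‖v‖ ^ 2 := by
    rw [map_sub, inner_sub_left, hAw, real_inner_smul_left, real_inner_self_eq_norm_sq]
    ring
  have hCg0 : 0 ≤ Cg := le_trans (norm_nonneg _) (hCg (θ t))
  have hbound : ⟪(ContinuousLinearMap.adjoint A) (u - w), v⟫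
      ≤ Cg * (Lf * ‖g (θ t) - y t‖) * ‖v‖ := by
    calc ⟪(ContinuousLinearMap.adjoint A) (u - w), v⟫
        ≤ ‖(ContinuousLinearMap.adjoint A) (u - w)‖ * ‖v‖ := real_inner_le_norm _ _
      _ ≤ (‖ContinuousLinearMap.adjoint A‖ * ‖u - w‖) * ‖v‖ := by
          gcongr; exact (ContinuousLinearMap.adjoint A).le_opNorm _
      _ ≤ Cg * (Lf * ‖g (θ t) - y t‖) * ‖v‖ := by
          have h1 : ‖ContinuousLinearMap.adjoint A‖ ≤ Cg := by
            rw [ContinuousLinearMap.adjoint.norm_map]; exact hCg (θ t)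
          have h2 : ‖u - w‖ ≤ Lf * ‖g (θ t) - y t‖ := hLf _ _
          have h2' : 0 ≤ Lf * ‖g (θ t) - y t‖ := le_trans (norm_nonneg _) h2
          gcongr
  have hAM : Cg * (Lf * ‖g (θ t) - y t‖) * ‖v‖
      ≤ (1 / (2 * α)) * ‖v‖ ^ 2 + (α * Cg ^ 2 * Lf ^ 2 / 2) * ‖g (θ t) - y t‖ ^ 2 := by
    have h' := sq_nonneg (‖v‖ - α * (Cg * (Lf * ‖g (θ t) - y t‖)))
    have hrw : (1 / (2 * α)) * ‖v‖ ^ 2 + (α * Cg ^ 2 * Lf ^ 2 / 2) * ‖g (θ t) - y t‖ ^ 2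
        = (‖v‖ ^ 2 + α ^ 2 * Cg ^ 2 * Lf ^ 2 * ‖g (θ t) - y t‖ ^ 2) / (2 * α) := by
      field_simp
    rw [hrw, le_div_iff₀ (by positivity)]
    nlinarith [h']
  have hαr : α⁻¹ = 1 / (2 * α) + 1 / (2 * α) := by
    field_simp
    ring
  have hα2 : α⁻¹ * ‖v‖ ^ 2 = (1 / (2 * α)) * ‖v‖ ^ 2 + (1 / (2 * α)) * ‖v‖ ^ 2 := by
    rw [hαr, add_mul]
  rw [hderiv, hadj, hsplit]
  linarith [hbound, hAM]
end

section
/- Consider the continuous-time dynamics θ'(t) = −α Dg(θ(t))ᵀ ∇f(y(t)) and y'(t) = −β(y(t) − g(θ(t))) + Dg(θ(t)) θ'(t) with α > 0 and β ≥ α C_g² L_f² / 2. Then the energy V(t) := f(g(θ(t))) + ‖g(θ(t)) − y(t)‖² satisfies V'(t) ≤ 0 for all t, i.e., V is non-increasing. -/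
set_option maxHeartbeats 1000000

theorem stmt3 {d m : ℕ}
    (f : EuclideanSpace ℝ (Fin m) → ℝ)
    (g : EuclideanSpace ℝ (Fin d) → EuclideanSpace ℝ (Fin m))
    (Cg Lf α β : ℝ) (hα : 0 < α) (hβ : β ≥ α * Cg ^ 2 * Lf ^ 2 / 2)
    (hf : ContDiff ℝ 1 f) (hg : ContDiff ℝ 1 g)
    (hCg : ∀ θ, ‖fderiv ℝ g θ‖ ≤ Cg)
    (hLf : ∀ u v, ‖gradient f u - gradient f v‖ ≤ Lf * ‖u - v‖)
    (θ : ℝ → EuclideanSpace ℝ (Fin d)) (y : ℝ → EuclideanSpace ℝ (Fin m))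
    (θ' : ℝ → EuclideanSpace ℝ (Fin d)) (y' : ℝ → EuclideanSpace ℝ (Fin m))
    (hθD : ∀ t, HasDerivAt θ (θ' t) t)
    (hyD : ∀ t, HasDerivAt y (y' t) t)
    (hODEθ : ∀ t, θ' t = -α • (ContinuousLinearMap.adjoint (fderiv ℝ g (θ t))) (gradient f (y t)))
    (hODEy : ∀ t, y' t = -β • (y t - g (θ t)) + (fderiv ℝ g (θ t)) (θ' t)) :
    ∀ t, deriv (fun s => f (g (θ s)) + ‖g (θ s) - y s‖ ^ 2) t ≤ 0 := by
  intro t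
  set G : EuclideanSpace ℝ (Fin d) →L[ℝ] EuclideanSpace ℝ (Fin m) := fderiv ℝ g (θ t) with hG
  set A := ContinuousLinearMap.adjoint G with hA
  set u : EuclideanSpace ℝ (Fin m) := g (θ t) with hu
  -- derivative of g ∘ θ
  have hgθ : HasDerivAt (fun s => g (θ s)) (G (θ' t)) t :=
    ((hg.differentiable one_ne_zero (θ t)).hasFDerivAt).comp_hasDerivAt t (hθD t)
  -- derivative of f ∘ g ∘ θ
  have hfgθ : HasDerivAt (fun s => f (g (θ s))) ((fderiv ℝ f u) (G (θ' t))) t :=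
    ((hf.differentiable one_ne_zero u).hasFDerivAt).comp_hasDerivAt t hgθ
  -- derivative of g∘θ - y
  have hdiff : HasDerivAt (fun s => g (θ s) - y s) (G (θ' t) - y' t) t := hgθ.sub (hyD t)
  -- derivative of norm squared
  have hnorm : HasDerivAt (fun s => ‖g (θ s) - y s‖ ^ 2)
      ((2 : ℝ) * inner ℝ (u - y t) (G (θ' t) - y' t)) t := by
    have h := hdiff.inner ℝ hdiff
    simp only [← real_inner_self_eq_norm_sq]
    refine h.congr_deriv ?_
    rw [real_inner_comm (G (θ' t) - y' t)]
    ring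
  have hderiv : deriv (fun s => f (g (θ s)) + ‖g (θ s) - y s‖ ^ 2) t
      = (fderiv ℝ f u) (G (θ' t)) + (2 : ℝ) * inner ℝ (u - y t) (G (θ' t) - y' t) :=
    (hfgθ.add hnorm).deriv
  rw [hderiv]
  -- first term
  have hfd : (fderiv ℝ f u) (G (θ' t)) = inner ℝ (gradient f u) (G (θ' t)) := by
    rw [gradient, ← InnerProductSpace.toDual_apply_apply,
      LinearIsometryEquiv.apply_symm_apply]
  have hterm1 : (fderiv ℝ f u) (G (θ' t))
      = -α * inner ℝ (A (gradient f u)) (A (gradient f (y t))) := by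
    rw [hfd, ← ContinuousLinearMap.adjoint_inner_left, hODEθ t, ← hG, ← hA,
      real_inner_smul_right]
  -- second term
  have hGy : G (θ' t) - y' t = (-β) • (u - y t) := by
    rw [hODEy t, ← hG, ← hu]
    module
  have hterm2 : (2 : ℝ) * inner ℝ (u - y t) (G (θ' t) - y' t)
      = -(2 * β) * ‖u - y t‖ ^ 2 := by
    rw [hGy, real_inner_smul_right, real_inner_self_eq_norm_sq]
    ring
  rw [hterm1, hterm2]
  -- now the algebra
  set p := A (gradient f u) with hp
  set q := A (gradient f (y t)) with hq
  set r := ‖u - y t‖ with hr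
  have hAnorm : ‖A‖ ≤ Cg := by
    rw [hA]
    calc ‖ContinuousLinearMap.adjoint G‖ = ‖G‖ := by
          exact (ContinuousLinearMap.adjoint : _ ≃ₗᵢ⋆[ℝ] _).norm_map G
      _ ≤ Cg := hCg (θ t)
  have hCg0 : (0 : ℝ) ≤ Cg := le_trans (norm_nonneg _) (hCg (θ t))
  have hb0 : (0 : ℝ) ≤ Lf * r := le_trans (norm_nonneg _) (hLf u (y t))
  have hpqd : ‖p - q‖ ≤ Cg * (Lf * r) := by
    rw [hp, hq, ← map_sub]
    calc ‖A (gradient f u - gradient f (y t))‖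
        ≤ ‖A‖ * ‖gradient f u - gradient f (y t)‖ := A.le_opNorm _
      _ ≤ Cg * (Lf * r) := by
          apply mul_le_mul hAnorm (hLf u (y t)) (norm_nonneg _) hCg0
  have hinner : (inner ℝ p q : ℝ) ≥ ‖q‖ ^ 2 - Cg * (Lf * r) * ‖q‖ := by
    have h1 : (inner ℝ p q : ℝ) = ‖q‖ ^ 2 + inner ℝ (p - q) q := by
      rw [inner_sub_left, real_inner_self_eq_norm_sq]; ring
    have h2 : (inner ℝ (p - q) q : ℝ) ≥ -(Cg * (Lf * r) * ‖q‖) := by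
      have := abs_real_inner_le_norm (p - q) q
      have h3 : ‖p - q‖ * ‖q‖ ≤ Cg * (Lf * r) * ‖q‖ :=
        mul_le_mul_of_nonneg_right hpqd (norm_nonneg _)
      nlinarith [abs_le.mp this]
    linarith
  have hβr : α * Cg ^ 2 * Lf ^ 2 / 2 * r ^ 2 ≤ β * r ^ 2 :=
    mul_le_mul_of_nonneg_right hβ (sq_nonneg r)
  nlinarith [sq_nonneg (‖q‖ - Cg * (Lf * r)), norm_nonneg q,
    mul_nonneg (mul_nonneg hCg0 hb0) (norm_nonneg q), hα.le,
    mul_nonneg hα.le (sq_nonneg (‖q‖ - Cg * (Lf * r))),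
    mul_nonneg hα.le (mul_nonneg (mul_nonneg hCg0 hb0) (norm_nonneg q))]
end

section
/- Suppose the SCSC tracking update y^{k+1} = (1−β)(y^k + g(θ^k; φ) − g(θ^{k−1}; φ)) + β g(θ^k; φ), where φ is a random sample with E[g(θ; φ)] = g(θ), E‖g(θ; φ) − g(θ)‖² ≤ V_g², and g(·; φ) is C_g-Lipschitz almost surely (as is g). Then conditioned on the past, E‖g(θ^k) − y^{k+1}‖² ≤ (1−β)²‖g(θ^{k−1}) − y^k‖² + 4(1−β)² C_g² ‖θ^k − θ^{k−1}‖² + 2β² V_g². -/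
open MeasureTheory RealInnerProductSpace

set_option maxHeartbeats 1000000

theorem stmt5 {d m : ℕ} {Ω : Type*} [MeasurableSpace Ω]
    (μ : Measure Ω) [IsProbabilityMeasure μ]
    (g : EuclideanSpace ℝ (Fin d) → EuclideanSpace ℝ (Fin m))
    (G : EuclideanSpace ℝ (Fin d) → Ω → EuclideanSpace ℝ (Fin m))
    (Cg Vg β : ℝ) (hβ0 : 0 < β) (hβ1 : β < 1)
    (hL2 : ∀ θ, MemLp (G θ) 2 μ)
    (hunbiased : ∀ θ, ∫ ω, G θ ω ∂μ = g θ)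
    (hvar : ∀ θ, ∫ ω, ‖G θ ω - g θ‖ ^ 2 ∂μ ≤ Vg ^ 2)
    (hLipG : ∀ ω θ θ', ‖G θ ω - G θ' ω‖ ≤ Cg * ‖θ - θ'‖)
    (hLipg : ∀ θ θ', ‖g θ - g θ'‖ ≤ Cg * ‖θ - θ'‖)
    (θkm1 θk : EuclideanSpace ℝ (Fin d)) (yk : EuclideanSpace ℝ (Fin m)) :
    ∫ ω, ‖g θk - ((1 - β) • (yk + G θk ω - G θkm1 ω) + β • G θk ω)‖ ^ 2 ∂μ
      ≤ (1 - β) ^ 2 * ‖g θkm1 - yk‖ ^ 2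
        + 4 * (1 - β) ^ 2 * Cg ^ 2 * ‖θk - θkm1‖ ^ 2
        + 2 * β ^ 2 * Vg ^ 2 := by
  have one_le_two' : (1 : ENNReal) ≤ 2 := by norm_num
  set a : EuclideanSpace ℝ (Fin m) := (1 - β) • (g θkm1 - yk) with ha
  set Δ : EuclideanSpace ℝ (Fin m) := g θk - g θkm1 with hΔ
  set W : Ω → EuclideanSpace ℝ (Fin m) := fun ω => G θk ω - G θkm1 ω with hW
  set Z : Ω → EuclideanSpace ℝ (Fin m) := fun ω =>
    (1 - β) • (Δ - W ω) + β • (g θk - G θk ω) with hZ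
  -- Memℒp / integrability facts
  have hXm : MemLp (G θk) 2 μ := hL2 θk
  have hYm : MemLp (G θkm1) 2 μ := hL2 θkm1
  have hWm : MemLp W 2 μ := hXm.sub hYm
  have hVm : MemLp (fun ω => Δ - W ω) 2 μ := (memLp_const Δ).sub hWm
  have hUm : MemLp (fun ω => g θk - G θk ω) 2 μ := (memLp_const (g θk)).sub hXm
  have hZm : MemLp Z 2 μ := (hVm.const_smul (1 - β)).add (hUm.const_smul β)
  have hZint : Integrable Z μ := hZm.integrable one_le_two'
  have hXint : Integrable (G θk) μ := hXm.integrable one_le_two'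
  have hYint : Integrable (G θkm1) μ := hYm.integrable one_le_two'
  have hWint : Integrable W μ := hXint.sub hYint
  have hZsq : Integrable (fun ω => ‖Z ω‖ ^ 2) μ := hZm.norm.integrable_sq
  have hVsq : Integrable (fun ω => ‖Δ - W ω‖ ^ 2) μ := hVm.norm.integrable_sq
  have hUsq : Integrable (fun ω => ‖g θk - G θk ω‖ ^ 2) μ := hUm.norm.integrable_sq
  have hWsq : Integrable (fun ω => ‖W ω‖ ^ 2) μ := hWm.norm.integrable_sq
  -- mean of W and Z
  have hWmean : ∫ ω, W ω ∂μ = Δ := by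
    rw [hW, hΔ, integral_sub hXint hYint, hunbiased, hunbiased]
  have hi1 : Integrable (fun ω => (1 - β) • (Δ - W ω)) μ :=
    (hVm.integrable one_le_two').smul (1 - β)
  have hi2 : Integrable (fun ω => β • (g θk - G θk ω)) μ :=
    (hUm.integrable one_le_two').smul β
  have hZmean : ∫ ω, Z ω ∂μ = 0 := by
    have h1 : ∫ ω, (Δ - W ω) ∂μ = 0 := by
      rw [integral_sub (integrable_const Δ) hWint, hWmean, integral_const]
      simp
    have h2 : ∫ ω, (g θk - G θk ω) ∂μ = 0 := by
      rw [integral_sub (integrable_const (g θk)) hXint, hunbiased, integral_const]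
      simp
    calc ∫ ω, Z ω ∂μ
        = ∫ ω, ((1 - β) • (Δ - W ω) + β • (g θk - G θk ω)) ∂μ := rfl
      _ = (∫ ω, (1 - β) • (Δ - W ω) ∂μ) + ∫ ω, β • (g θk - G θk ω) ∂μ :=
          integral_add hi1 hi2
      _ = (1 - β) • (∫ ω, (Δ - W ω) ∂μ) + β • ∫ ω, (g θk - G θk ω) ∂μ := by
          rw [integral_smul, integral_smul]
      _ = 0 := by rw [h1, h2]; simp
  -- decomposition of the error
  have hdecomp : ∀ ω, g θk - ((1 - β) • (yk + G θk ω - G θkm1 ω) + β • G θk ω)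
      = a + Z ω := by
    intro ω
    simp only [ha, hZ, hΔ, hW]
    module
  -- expansion of the expected square
  have hi3 : Integrable (fun ω => 2 * ⟪a, Z ω⟫) μ := (hZint.const_inner a).const_mul 2
  have hi4 : Integrable (fun ω => 2 * ⟪a, Z ω⟫ + ‖Z ω‖ ^ 2) μ := hi3.add hZsq
  have hexp : ∫ ω, ‖g θk - ((1 - β) • (yk + G θk ω - G θkm1 ω) + β • G θk ω)‖ ^ 2 ∂μ
      = ‖a‖ ^ 2 + ∫ ω, ‖Z ω‖ ^ 2 ∂μ := by
    have h1 : ∀ ω, ‖g θk - ((1 - β) • (yk + G θk ω - G θkm1 ω) + β • G θk ω)‖ ^ 2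
        = ‖a‖ ^ 2 + (2 * ⟪a, Z ω⟫ + ‖Z ω‖ ^ 2) := by
      intro ω
      rw [hdecomp ω, norm_add_sq_real]
      ring
    calc ∫ ω, ‖g θk - ((1 - β) • (yk + G θk ω - G θkm1 ω) + β • G θk ω)‖ ^ 2 ∂μ
        = ∫ ω, (‖a‖ ^ 2 + (2 * ⟪a, Z ω⟫ + ‖Z ω‖ ^ 2)) ∂μ := by simp only [h1]
      _ = ‖a‖ ^ 2 + ∫ ω, (2 * ⟪a, Z ω⟫ + ‖Z ω‖ ^ 2) ∂μ := by
          rw [integral_add (integrable_const _) hi4, integral_const]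
          simp
      _ = ‖a‖ ^ 2 + ((2 * ⟪a, ∫ ω, Z ω ∂μ⟫) + ∫ ω, ‖Z ω‖ ^ 2 ∂μ) := by
          rw [integral_add hi3 hZsq, integral_const_mul, integral_inner hZint]
      _ = ‖a‖ ^ 2 + ∫ ω, ‖Z ω‖ ^ 2 ∂μ := by rw [hZmean]; simp
  -- pointwise bound on ‖Z‖²
  have hZbound : ∀ ω, ‖Z ω‖ ^ 2
      ≤ 2 * (1 - β) ^ 2 * ‖Δ - W ω‖ ^ 2 + 2 * β ^ 2 * ‖g θk - G θk ω‖ ^ 2 := by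
    intro ω
    have h1 : ‖Z ω‖ ≤ |1 - β| * ‖Δ - W ω‖ + |β| * ‖g θk - G θk ω‖ := by
      refine (norm_add_le _ _).trans ?_
      rw [norm_smul, norm_smul]
      simp [Real.norm_eq_abs]
    have h2 : (0:ℝ) ≤ ‖Z ω‖ := norm_nonneg _
    have h3 : |1 - β| ^ 2 = (1 - β) ^ 2 := sq_abs _
    have h4 : |β| ^ 2 = β ^ 2 := sq_abs _
    nlinarith [sq_abs (1 - β), sq_abs β, norm_nonneg (Δ - W ω),
      norm_nonneg (g θk - G θk ω), abs_nonneg (1 - β), abs_nonneg β,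
      sq_nonneg (|1 - β| * ‖Δ - W ω‖ - |β| * ‖g θk - G θk ω‖)]
  -- variance bound: ∫‖Δ - W‖² ≤ ∫‖W‖²
  have hi5 : Integrable (fun ω => 2 * ⟪Δ, W ω⟫) μ := (hWint.const_inner Δ).const_mul 2
  have hi6 : Integrable (fun ω => ‖W ω‖ ^ 2 - 2 * ⟪Δ, W ω⟫) μ := hWsq.sub hi5
  have hvarW : ∫ ω, ‖Δ - W ω‖ ^ 2 ∂μ ≤ ∫ ω, ‖W ω‖ ^ 2 ∂μ := by
    have h1 : ∀ ω, ‖Δ - W ω‖ ^ 2 = ‖W ω‖ ^ 2 - 2 * ⟪Δ, W ω⟫ + ‖Δ‖ ^ 2 := by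
      intro ω
      rw [norm_sub_rev, norm_sub_sq_real, real_inner_comm]
    have h2 : ∫ ω, ‖Δ - W ω‖ ^ 2 ∂μ = ∫ ω, ‖W ω‖ ^ 2 ∂μ - ‖Δ‖ ^ 2 := by
      calc ∫ ω, ‖Δ - W ω‖ ^ 2 ∂μ
          = ∫ ω, (‖W ω‖ ^ 2 - 2 * ⟪Δ, W ω⟫ + ‖Δ‖ ^ 2) ∂μ := by simp only [h1]
        _ = (∫ ω, (‖W ω‖ ^ 2 - 2 * ⟪Δ, W ω⟫) ∂μ) + ‖Δ‖ ^ 2 := by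
            rw [integral_add hi6 (integrable_const _), integral_const]
            simp
        _ = (∫ ω, ‖W ω‖ ^ 2 ∂μ) - 2 * ⟪Δ, ∫ ω, W ω ∂μ⟫ + ‖Δ‖ ^ 2 := by
            rw [integral_sub hWsq hi5, integral_const_mul, integral_inner hWint]
        _ = ∫ ω, ‖W ω‖ ^ 2 ∂μ - ‖Δ‖ ^ 2 := by
            rw [hWmean, real_inner_self_eq_norm_sq]; ring
    rw [h2]
    nlinarith [sq_nonneg ‖Δ‖]
  -- Lipschitz second moment bound
  have hWbound : ∫ ω, ‖W ω‖ ^ 2 ∂μ ≤ Cg ^ 2 * ‖θk - θkm1‖ ^ 2 := by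
    have h0 : ∀ ω, ‖W ω‖ ≤ Cg * ‖θk - θkm1‖ := fun ω => hLipG ω θk θkm1
    have h1 : ∀ ω, ‖W ω‖ ^ 2 ≤ Cg ^ 2 * ‖θk - θkm1‖ ^ 2 := by
      intro ω
      nlinarith [h0 ω, norm_nonneg (W ω), norm_nonneg (θk - θkm1)]
    calc ∫ ω, ‖W ω‖ ^ 2 ∂μ ≤ ∫ _ω, Cg ^ 2 * ‖θk - θkm1‖ ^ 2 ∂μ :=
          integral_mono hWsq (integrable_const _) h1
      _ = Cg ^ 2 * ‖θk - θkm1‖ ^ 2 := by simp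
  -- variance oracle bound
  have hUbound : ∫ ω, ‖g θk - G θk ω‖ ^ 2 ∂μ ≤ Vg ^ 2 := by
    have h1 : (fun ω => ‖g θk - G θk ω‖ ^ 2) = fun ω => ‖G θk ω - g θk‖ ^ 2 := by
      funext ω; rw [norm_sub_rev]
    rw [h1]; exact hvar θk
  -- put everything together
  have hZint2 : ∫ ω, ‖Z ω‖ ^ 2 ∂μ
      ≤ 2 * (1 - β) ^ 2 * (∫ ω, ‖Δ - W ω‖ ^ 2 ∂μ) + 2 * β ^ 2 * ∫ ω, ‖g θk - G θk ω‖ ^ 2 ∂μ := by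
    calc ∫ ω, ‖Z ω‖ ^ 2 ∂μ
        ≤ ∫ ω, (2 * (1 - β) ^ 2 * ‖Δ - W ω‖ ^ 2 + 2 * β ^ 2 * ‖g θk - G θk ω‖ ^ 2) ∂μ :=
          integral_mono hZsq ((hVsq.const_mul _).add (hUsq.const_mul _)) hZbound
      _ = 2 * (1 - β) ^ 2 * (∫ ω, ‖Δ - W ω‖ ^ 2 ∂μ)
            + 2 * β ^ 2 * ∫ ω, ‖g θk - G θk ω‖ ^ 2 ∂μ := by
          rw [integral_add (hVsq.const_mul _) (hUsq.const_mul _),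
            integral_const_mul, integral_const_mul]
  have hanorm : ‖a‖ ^ 2 = (1 - β) ^ 2 * ‖g θkm1 - yk‖ ^ 2 := by
    rw [ha, norm_smul, mul_pow, Real.norm_eq_abs, sq_abs]
  rw [hexp, hanorm]
  have m1 : 2 * (1 - β) ^ 2 * (∫ ω, ‖Δ - W ω‖ ^ 2 ∂μ)
      ≤ 2 * (1 - β) ^ 2 * (Cg ^ 2 * ‖θk - θkm1‖ ^ 2) :=
    mul_le_mul_of_nonneg_left (hvarW.trans hWbound) (by positivity)
  have m2 : 2 * β ^ 2 * (∫ ω, ‖g θk - G θk ω‖ ^ 2 ∂μ) ≤ 2 * β ^ 2 * Vg ^ 2 :=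
    mul_le_mul_of_nonneg_left hUbound (by positivity)
  have m3 : (0:ℝ) ≤ (1 - β) ^ 2 * (Cg ^ 2 * ‖θk - θkm1‖ ^ 2) := by positivity
  linarith [hZint2, m1, m2, m3]
end

section
/- Let η₁, η₂ satisfy 0 ≤ η₁ < √η₂ < 1 and set γ = η₁²/η₂. Suppose real sequences satisfy h_{k+1} = η₁ h_k + (1−η₁)∇_k with h_0 = 0, and v̂_{k+1} ≥ (1−η₂)∑_{l=0}^{k} η₂^{k−l} ∇_l². Then h_{k+1}² ≤ (1−η₂)^{-1}(1−γ)^{-1} v̂_{k+1}. -/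
theorem stmt12 (η₁ η₂ γ : ℝ) (h grad vhat : ℕ → ℝ)
    (hη0 : 0 ≤ η₁) (hη1 : η₁ < Real.sqrt η₂) (hη2 : Real.sqrt η₂ < 1)
    (hγ : γ = η₁ ^ 2 / η₂)
    (h0 : h 0 = 0)
    (hrec : ∀ k, h (k + 1) = η₁ * h k + (1 - η₁) * grad k)
    (hv : ∀ k, vhat (k + 1) ≥ (1 - η₂) * ∑ l ∈ Finset.range (k + 1), η₂ ^ (k - l) * (grad l) ^ 2) :
    ∀ k, (h (k + 1)) ^ 2 ≤ (1 - η₂)⁻¹ * (1 - γ)⁻¹ * vhat (k + 1) := by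
  have hs0 : 0 < Real.sqrt η₂ := lt_of_le_of_lt hη0 hη1
  have hη₂0 : 0 < η₂ := Real.sqrt_pos.1 hs0
  have hsq : Real.sqrt η₂ ^ 2 = η₂ := Real.sq_sqrt hη₂0.le
  have hη₂1 : η₂ < 1 := by nlinarith [Real.sqrt_nonneg η₂]
  have hη₁sq : η₁ ^ 2 < η₂ := by nlinarith
  have hγ0 : 0 ≤ γ := by rw [hγ]; positivity
  have hγ1 : γ < 1 := by rw [hγ, div_lt_one hη₂0]; exact hη₁sq
  have hη₁1 : η₁ < 1 := lt_trans hη1 hη2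
  have hγη₂ : γ * η₂ = η₁ ^ 2 := by rw [hγ, div_mul_cancel₀ _ hη₂0.ne']
  have hsγ : Real.sqrt γ * Real.sqrt η₂ = η₁ := by
    rw [← Real.sqrt_mul hγ0, hγη₂, Real.sqrt_sq hη0]
  -- step 1: |h (k+1)| ≤ ∑ η₁^(k-l) |grad l|
  have habs : ∀ k, |h (k + 1)| ≤ ∑ l ∈ Finset.range (k + 1), η₁ ^ (k - l) * |grad l| := by
    intro k
    induction k with
    | zero =>
      simp [hrec, h0]
      rw [abs_of_nonneg (by linarith : (0:ℝ) ≤ 1 - η₁)]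
      nlinarith [abs_nonneg (grad 0)]
    | succ n ih =>
      rw [hrec]
      calc |η₁ * h (n + 1) + (1 - η₁) * grad (n + 1)|
          ≤ |η₁ * h (n + 1)| + |(1 - η₁) * grad (n + 1)| := abs_add_le _ _
        _ = η₁ * |h (n + 1)| + (1 - η₁) * |grad (n + 1)| := by
            rw [abs_mul, abs_mul, abs_of_nonneg hη0, abs_of_nonneg (by linarith : (0:ℝ) ≤ 1 - η₁)]
        _ ≤ η₁ * (∑ l ∈ Finset.range (n + 1), η₁ ^ (n - l) * |grad l|) + 1 * |grad (n + 1)| := by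
            gcongr
            linarith
        _ = ∑ l ∈ Finset.range (n + 1 + 1), η₁ ^ (n + 1 - l) * |grad l| := by
            rw [Finset.mul_sum]
            conv_rhs => rw [Finset.sum_range_succ]
            congr 1
            · apply Finset.sum_congr rfl
              intro l hl
              simp only [Finset.mem_range] at hl
              have : n + 1 - l = (n - l) + 1 := by omega
              rw [this, pow_succ]
              ring
            · simp
  intro k
  -- step 2: Cauchy-Schwarz
  set S := ∑ l ∈ Finset.range (k + 1), η₂ ^ (k - l) * (grad l) ^ 2 with hS
  have hS0 : 0 ≤ S := by
    apply Finset.sum_nonneg; intro l _; positivity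
  have hCS : (∑ l ∈ Finset.range (k + 1), η₁ ^ (k - l) * |grad l|) ^ 2 ≤
      (∑ l ∈ Finset.range (k + 1), γ ^ (k - l)) * S := by
    have key := Finset.sum_mul_sq_le_sq_mul_sq (Finset.range (k + 1))
      (fun l => Real.sqrt γ ^ (k - l)) (fun l => Real.sqrt η₂ ^ (k - l) * |grad l|)
    have e1 : ∀ l ∈ Finset.range (k+1), Real.sqrt γ ^ (k - l) * (Real.sqrt η₂ ^ (k - l) * |grad l|)
        = η₁ ^ (k - l) * |grad l| := by
      intro l _
      rw [← mul_assoc, ← mul_pow, hsγ]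
    have e2 : ∀ l ∈ Finset.range (k+1), (Real.sqrt γ ^ (k - l)) ^ 2 = γ ^ (k - l) := by
      intro l _
      rw [← pow_mul, mul_comm (k-l) 2, pow_mul, Real.sq_sqrt hγ0]
    have e3 : ∀ l ∈ Finset.range (k+1), (Real.sqrt η₂ ^ (k - l) * |grad l|) ^ 2
        = η₂ ^ (k - l) * (grad l) ^ 2 := by
      intro l _
      rw [mul_pow, ← pow_mul, mul_comm (k-l) 2, pow_mul, Real.sq_sqrt hη₂0.le, sq_abs]
    rw [Finset.sum_congr rfl e1, Finset.sum_congr rfl e2, Finset.sum_congr rfl e3] at key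
    exact key
  -- step 3: geometric sum bound
  have hgeom : (∑ l ∈ Finset.range (k + 1), γ ^ (k - l)) ≤ (1 - γ)⁻¹ := by
    have hre : (∑ l ∈ Finset.range (k + 1), γ ^ (k - l))
        = ∑ j ∈ Finset.range (k + 1), γ ^ j := by
      rw [← Finset.sum_range_reflect]
      apply Finset.sum_congr rfl
      intro j hj
      simp only [Finset.mem_range] at hj
      congr 1
      omega
    rw [hre]
    have h1γ : (0:ℝ) < 1 - γ := by linarith
    have key : (1 - γ) * (∑ j ∈ Finset.range (k + 1), γ ^ j) = 1 - γ ^ (k + 1) := by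
      linear_combination -(geom_sum_mul γ (k+1))
    rw [← mul_le_mul_iff_right₀ h1γ, key, mul_inv_cancel₀ h1γ.ne']
    linarith [pow_nonneg hγ0 (k+1)]
  -- step 4: combine
  have hvk := hv k
  have hSv : S ≤ (1 - η₂)⁻¹ * vhat (k + 1) := by
    rw [ge_iff_le, ← le_div_iff₀' (by linarith : (0:ℝ) < 1 - η₂)] at hvk
    rw [div_eq_inv_mul] at hvk
    exact hvk
  have h1 : (h (k + 1)) ^ 2 ≤ (∑ l ∈ Finset.range (k + 1), η₁ ^ (k - l) * |grad l|) ^ 2 := by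
    rw [← sq_abs]
    have := habs k
    have hnn : (0:ℝ) ≤ |h (k+1)| := abs_nonneg _
    nlinarith
  have h2 : (∑ l ∈ Finset.range (k + 1), γ ^ (k - l)) * S ≤ (1 - γ)⁻¹ * S :=
    mul_le_mul_of_nonneg_right hgeom hS0
  have h3 : (1 - γ)⁻¹ * S ≤ (1 - γ)⁻¹ * ((1 - η₂)⁻¹ * vhat (k + 1)) := by
    apply mul_le_mul_of_nonneg_left hSv
    have : (0:ℝ) < 1 - γ := by linarith
    positivity
  calc (h (k + 1)) ^ 2 ≤ (∑ l ∈ Finset.range (k + 1), η₁ ^ (k - l) * |grad l|) ^ 2 := h1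
    _ ≤ (∑ l ∈ Finset.range (k + 1), γ ^ (k - l)) * S := hCS
    _ ≤ (1 - γ)⁻¹ * S := h2
    _ ≤ (1 - γ)⁻¹ * ((1 - η₂)⁻¹ * vhat (k + 1)) := h3
    _ = (1 - η₂)⁻¹ * (1 - γ)⁻¹ * vhat (k + 1) := by ring
end
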